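/- Let n > 1 be an odd integer, let Γ be a finite connected pentavalent graph with exactly 4n vertices, and let G ≤ Aut Γ act arc-transitively on Γ. If N is a normal subgroup of G whose order is a power of 2, then |N| ≤ 2. -/

import Mathlib

/-- The automorphism group of a simple graph acts on its vertices. -/
instance graphAutMulAction {V : Type*} {Γ : SimpleGraph V} : MulAction (Γ ≃g Γ) V where
  smul g v := g v
  one_smul _ := rfl
  mul_smul _ _ _ := rfl

/-- A normal 2-subgroup of an arc-transitive group of automorphisms of a connected
pentavalent graph of order `4n` with `n > 1` odd has order at most 2. -/
theorem normal_two_subgroup_le_two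
    {V : Type*} [Fintype V] (Γ : SimpleGraph V) [DecidableRel Γ.Adj]
    (n : ℕ) (hn : 1 < n) (hodd : Odd n)
    (hcard : Fintype.card V = 4 * n)
    (hconn : Γ.Connected) (hdeg : ∀ v : V, Γ.degree v = 5)
    (G : Subgroup (Γ ≃g Γ))
    (harc : ∀ ⦃u v u' v' : V⦄, Γ.Adj u v → Γ.Adj u' v' →
      ∃ g ∈ G, g • u = u' ∧ g • v = v')
    (N : Subgroup G) (hnorm : N.Normal) (k : ℕ) (hN : Nat.card N = 2 ^ k) :
    Nat.card N ≤ 2 := by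
  classical
  have hfinAut : Finite (Γ ≃g Γ) :=
    Finite.of_injective (fun g => g.toEquiv) fun a b h => by
      cases a; cases b; simpa using h
  -- Push `N` into the automorphism group.
  set M : Subgroup (Γ ≃g Γ) := N.map G.subtype with hMdef
  have hMcard : Nat.card M = 2 ^ k := by
    rw [← hN]
    exact (Nat.card_congr (Subgroup.equivMapOfInjective N G.subtype
      G.subtype_injective).toEquiv).symm
  have hMsmul : ∀ (x : M) (v : V), x • v = (x : Γ ≃g Γ) • v := fun _ _ => rfl
  have hconj : ∀ g : Γ ≃g Γ, g ∈ G → ∀ x : Γ ≃g Γ, x ∈ M → g * x * g⁻¹ ∈ M := by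
    intro g hg x hx
    rcases Subgroup.mem_map.mp hx with ⟨y, hy, rfl⟩
    exact Subgroup.mem_map.mpr ⟨⟨g, hg⟩ * y * ⟨g, hg⟩⁻¹, hnorm.conj_mem y hy ⟨g, hg⟩, rfl⟩
  have hMp : IsPGroup 2 M := IsPGroup.of_card hMcard
  have hadjsmul : ∀ (a : Γ ≃g Γ) (u w : V), Γ.Adj u w → Γ.Adj (a • u) (a • w) :=
    fun a u w h => a.map_rel_iff.mpr h
  -- Step A: an element of `M` fixing a vertex fixes all its neighbours.
  have stepA : ∀ w : V, ∀ x : Γ ≃g Γ, x ∈ M → x • w = w → ∀ u, Γ.Adj w u → x • u = u := by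
    intro w
    set St := MulAction.stabilizer M w with hStdef
    letI act : MulAction St {u : V // Γ.Adj w u} :=
      { smul := fun g u => ⟨((g : M) : Γ ≃g Γ) • (u : V), by
          have h1 : ((g : M) : Γ ≃g Γ) • w = w := g.2
          have h2 := hadjsmul ((g : M) : Γ ≃g Γ) w u u.2
          rwa [h1] at h2⟩
        one_smul := fun u => Subtype.ext (one_smul _ _)
        mul_smul := fun a b u => Subtype.ext (mul_smul (a : Γ ≃g Γ) (b : Γ ≃g Γ) (u : V)) }
    have hactsmul : ∀ (g : St) (u : {u : V // Γ.Adj w u}),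
        ((g • u : {u : V // Γ.Adj w u}) : V) = ((g : M) : Γ ≃g Γ) • (u : V) := fun _ _ => rfl
    have hStp : IsPGroup 2 St := hMp.to_subgroup St
    have hcard5 : Nat.card {u : V // Γ.Adj w u} = 5 := by
      rw [Nat.card_eq_fintype_card]
      have := Γ.card_neighborSet_eq_degree w
      rw [hdeg w] at this
      exact this
    have hfix := hStp.nonempty_fixed_point_of_prime_not_dvd_card {u : V // Γ.Adj w u}
      (by rw [hcard5]; norm_num)
    obtain ⟨u0, hu0⟩ := hfix
    have hu0' : ∀ g : St, g • u0 = u0 := fun g => hu0 g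
    intro x hx hxw u hu
    obtain ⟨g, hg, hgw, hgu⟩ := harc u0.2 hu
    have hy : g⁻¹ * x * g ∈ M := by
      have := hconj g⁻¹ (inv_mem hg) x hx
      rwa [inv_inv] at this
    have hginvw : g⁻¹ • w = w := by
      conv_lhs => rw [← hgw]
      rw [inv_smul_smul]
    have hyw : (g⁻¹ * x * g) • w = w := by
      rw [mul_smul, mul_smul, hgw, hxw]
      exact hginvw
    have hmem : (⟨g⁻¹ * x * g, hy⟩ : M) ∈ St := by
      rw [hStdef, MulAction.mem_stabilizer_iff]
      exact hyw
    have := congrArg Subtype.val (hu0' ⟨⟨g⁻¹ * x * g, hy⟩, hmem⟩)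
    rw [hactsmul] at this
    -- this : (g⁻¹ * x * g) • (u0 : V) = u0
    have hxu : x • (g • (u0 : V)) = g • (u0 : V) := by
      conv_rhs => rw [← this]
      rw [mul_smul, mul_smul, smul_inv_smul]
    rwa [hgu] at hxu
  -- Step B: `M` acts semiregularly.
  have semireg : ∀ x : Γ ≃g Γ, x ∈ M → ∀ v : V, x • v = v → x = 1 := by
    intro x hx v hv
    have key : ∀ (a b : V), Γ.Walk a b → x • a = a → x • b = b := by
      intro a b p
      induction p with
      | nil => exact fun h => h
      | cons hadj _ ih => exact fun ha => ih (stepA _ x hx ha _ hadj)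
    have hall : ∀ u : V, x • u = u := fun u =>
      key v u (hconn.preconnected v u).some hv
    ext u
    exact hall u
  -- orbits all have cardinality `2 ^ k`
  have horb : ∀ v : V, Nat.card (MulAction.orbit M v) = 2 ^ k := by
    intro v
    have hstab : MulAction.stabilizer M v = ⊥ := by
      ext x
      simp only [MulAction.mem_stabilizer_iff, Subgroup.mem_bot]
      constructor
      · intro h
        have : (x : Γ ≃g Γ) = 1 := semireg x x.2 v h
        exact Subtype.ext this
      · rintro rfl; exact one_smul _ _
    have h1 := Nat.card_congr (MulAction.orbitEquivQuotientStabilizer M v)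
    rw [hstab] at h1
    rw [h1, Nat.card_congr (QuotientGroup.quotientBot (G := M)).toEquiv, hMcard]
  -- the orbit map
  set f : V → MulAction.orbitRel.Quotient M V := fun v => Quotient.mk'' v with hfdef
  have hfeq : ∀ a b : V, f a = f b ↔ a ∈ MulAction.orbit M b := by
    intro a b
    rw [hfdef]
    constructor
    · intro h
      exact MulAction.orbitRel_apply.mp (Quotient.eq''.mp h)
    · intro h
      exact Quotient.eq''.mpr (MulAction.orbitRel_apply.mpr h)
  have hfsurj : ∀ B : MulAction.orbitRel.Quotient M V, ∃ v : V, f v = B := by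
    intro B
    obtain ⟨v, hv⟩ := Quotient.exists_rep B
    exact ⟨v, by rw [hfdef]; exact hv⟩
  letI : Fintype (MulAction.orbitRel.Quotient M V) := Fintype.ofFinite _
  -- fibers of `f` are orbits
  have hfiber : ∀ u₀ : V,
      (Finset.univ.filter fun u => f u = f u₀) = (MulAction.orbit M u₀).toFinset := by
    intro u₀
    ext u
    simp [hfeq u u₀]
  have hfibercard : ∀ u₀ : V,
      (Finset.univ.filter fun u => f u = f u₀).card = 2 ^ k := by
    intro u₀
    rw [hfiber u₀, Set.toFinset_card, ← Nat.card_eq_fintype_card, horb u₀]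
  -- counting vertices by orbits
  have hcount : 4 * n = Fintype.card (MulAction.orbitRel.Quotient M V) * 2 ^ k := by
    have h0 : (Finset.univ : Finset V).card =
        ∑ B ∈ (Finset.univ : Finset (MulAction.orbitRel.Quotient M V)),
          (Finset.univ.filter fun u => f u = B).card :=
      Finset.card_eq_sum_card_fiberwise fun x _ => Finset.mem_univ _
    have h1 : ∀ B ∈ (Finset.univ : Finset (MulAction.orbitRel.Quotient M V)),
        (Finset.univ.filter fun u => f u = B).card = 2 ^ k := by
      intro B _
      obtain ⟨u₀, hu₀⟩ := hfsurj B
      rw [← hu₀]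
      exact hfibercard u₀
    rw [Finset.sum_congr rfl h1, Finset.sum_const, smul_eq_mul] at h0
    rw [← hcard, ← Finset.card_univ, h0, Finset.card_univ]
  -- `2 ^ k` divides 4
  have hdvd4 : 2 ^ k ∣ 4 := by
    have hdvd : 2 ^ k ∣ 4 * n := ⟨_, by rw [hcount, mul_comm]⟩
    exact (Nat.Coprime.pow_left k (hodd.coprime_two_left)).dvd_of_dvd_mul_right hdvd
  have hk2 : k ≤ 2 := by
    by_contra h
    have h8 : 2 ^ 3 ≤ 2 ^ k := Nat.pow_le_pow_right (by norm_num) (by omega)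
    have h4 : 2 ^ k ≤ 4 := Nat.le_of_dvd (by norm_num) hdvd4
    norm_num at h8
    omega
  rcases Nat.lt_or_ge k 2 with hk | hk
  · rw [hN]
    calc 2 ^ k ≤ 2 ^ 1 := Nat.pow_le_pow_right (by norm_num) (by omega)
      _ = 2 := rfl
  · -- the case `|N| = 4`: derive a contradiction
    exfalso
    have hk4 : k = 2 := le_antisymm hk2 hk
    subst hk4
    by_cases hint : ∃ a b : V, Γ.Adj a b ∧ ∃ x ∈ M, x • a = b
    · -- all edges lie inside orbits; connectivity collapses everything into one orbit
      obtain ⟨v0, w0, hadj0, x0, hx0, hxv⟩ := hint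
      have hall : ∀ a b : V, Γ.Adj a b → ∃ x ∈ M, x • a = b := by
        intro a b hab
        obtain ⟨g, hg, hga, hgb⟩ := harc hadj0 hab
        refine ⟨g * x0 * g⁻¹, hconj g hg x0 hx0, ?_⟩
        rw [mul_smul, mul_smul, ← hga, inv_smul_smul, hxv, hgb]
      have hallv : ∀ b : V, b ∈ MulAction.orbit M v0 := by
        intro b
        obtain ⟨p⟩ := hconn.preconnected v0 b
        have hstep : ∀ (a c : V), Γ.Walk a c → a ∈ MulAction.orbit M v0 →
            c ∈ MulAction.orbit M v0 := by
          intro a c q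
          induction q with
          | nil => exact fun h => h
          | cons hadj _ ih =>
            intro ha
            apply ih
            obtain ⟨x, hxM, hx⟩ := hall _ _ hadj
            obtain ⟨y, hy⟩ := MulAction.mem_orbit_iff.mp ha
            refine MulAction.mem_orbit_iff.mpr ⟨⟨x, hxM⟩ * y, ?_⟩
            rw [mul_smul, hy, hMsmul, hx]
        exact hstep v0 b p (MulAction.mem_orbit_self v0)
      have hV4 : Fintype.card V = 4 := by
        have h1 : (Finset.univ : Finset V) = (MulAction.orbit M v0).toFinset := by
          ext u; simp [hallv u]
        rw [← Finset.card_univ, h1, Set.toFinset_card, ← Nat.card_eq_fintype_card, horb v0]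
        norm_num
      omega
    · -- no edge lies inside an orbit: build the quotient graph and use handshake
      push_neg at hint
      set Q : SimpleGraph (MulAction.orbitRel.Quotient M V) :=
        { Adj := fun B B' => B ≠ B' ∧ ∃ a b : V, f a = B ∧ f b = B' ∧ Γ.Adj a b
          symm := ⟨by
            rintro B B' ⟨hne, a, b, ha, hb, hab⟩
            exact ⟨hne.symm, b, a, hb, ha, hab.symm⟩⟩
          loopless := ⟨fun B h => h.1 rfl⟩ } with hQdef
      letI : DecidableRel Q.Adj := fun a b => Classical.propDecidable _
      have hQAdj : ∀ B B', Q.Adj B B' ↔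
          (B ≠ B' ∧ ∃ a b : V, f a = B ∧ f b = B' ∧ Γ.Adj a b) := fun _ _ => Iff.rfl
      -- the neighbours of `f v` in `Q` are the images of the neighbours of `v`
      have hnbr : ∀ v : V, Q.neighborFinset (f v) = (Γ.neighborFinset v).image f := by
        intro v
        ext B'
        rw [SimpleGraph.mem_neighborFinset, hQAdj]
        constructor
        · rintro ⟨hne, a, b, ha, hb, hab⟩
          obtain ⟨y, hy⟩ := MulAction.mem_orbit_iff.mp ((hfeq a v).mp ha)
          have hy' : (y : Γ ≃g Γ) • v = a := by rw [← hMsmul]; exact hy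
          refine Finset.mem_image.mpr ⟨(y : Γ ≃g Γ)⁻¹ • b, ?_, ?_⟩
          · rw [SimpleGraph.mem_neighborFinset]
            have h2 := hadjsmul (y : Γ ≃g Γ)⁻¹ a b hab
            rwa [← hy', inv_smul_smul] at h2
          · rw [← hb]
            apply (hfeq _ _).mpr
            refine MulAction.mem_orbit_iff.mpr ⟨y⁻¹, ?_⟩
            rw [hMsmul]
            rfl
        · intro hB'
          obtain ⟨u, hu, hfu⟩ := Finset.mem_image.mp hB'
          rw [SimpleGraph.mem_neighborFinset] at hu
          subst hfu
          refine ⟨?_, v, u, rfl, rfl, hu⟩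
          intro h
          obtain ⟨x, hx⟩ := MulAction.mem_orbit_iff.mp ((hfeq u v).mp h.symm)
          exact hint v u hu (x : Γ ≃g Γ) x.2 (by rw [← hMsmul]; exact hx)
      -- `f` is injective on the neighbours of `v`
      have hinj : ∀ v : V, Set.InjOn f (Γ.neighborFinset v : Set V) := by
        intro v
        set s := Γ.neighborFinset v with hsdef
        have hs5 : s.card = 5 := by rw [hsdef, Γ.card_neighborFinset_eq_degree, hdeg]
        have hfibeq : ∀ u ∈ s, ∀ u' ∈ s,
            (s.filter fun w => f w = f u).card ≤ (s.filter fun w => f w = f u').card := by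
          intro u hu u' hu'
          rw [hsdef, SimpleGraph.mem_neighborFinset] at hu hu'
          obtain ⟨g, hg, hgv, hgu⟩ := harc hu hu'
          apply Finset.card_le_card_of_injOn (fun w => g • w)
          · intro w hw
            obtain ⟨hws, hwf⟩ := Finset.mem_filter.mp hw
            refine Finset.mem_filter.mpr ⟨?_, ?_⟩
            · rw [hsdef, SimpleGraph.mem_neighborFinset] at hws ⊢
              have := hadjsmul g v w hws
              rwa [hgv] at this
            · obtain ⟨x, hx⟩ := MulAction.mem_orbit_iff.mp ((hfeq w u).mp hwf)
              apply (hfeq _ _).mpr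
              have hyM : g * (x : Γ ≃g Γ) * g⁻¹ ∈ M := hconj g hg _ x.2
              refine MulAction.mem_orbit_iff.mpr ⟨⟨_, hyM⟩, ?_⟩
              rw [hMsmul]
              show (g * (x : Γ ≃g Γ) * g⁻¹) • u' = g • w
              rw [mul_smul, mul_smul, ← hgu, inv_smul_smul, ← hMsmul, hx]
          · intro a _ b _ hab
            exact MulAction.injective g hab
        have hfibcard : ∀ u ∈ s, ∀ u' ∈ s,
            (s.filter fun w => f w = f u).card = (s.filter fun w => f w = f u').card :=
          fun u hu u' hu' => le_antisymm (hfibeq u hu u' hu') (hfibeq u' hu' u hu)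
        -- fibers have size at most 4
        have hfible : ∀ u ∈ s, (s.filter fun w => f w = f u).card ≤ 4 := by
          intro u hu
          have hsub : (s.filter fun w => f w = f u) ⊆ (MulAction.orbit M u).toFinset := by
            intro w hw
            rw [Finset.mem_filter] at hw
            rw [Set.mem_toFinset]
            exact (hfeq w u).mp hw.2
          calc (s.filter fun w => f w = f u).card
              ≤ (MulAction.orbit M u).toFinset.card := Finset.card_le_card hsub
            _ = 4 := by
                rw [Set.toFinset_card, ← Nat.card_eq_fintype_card, horb u]
                norm_num
        -- conclude each fiber is a singleton
        intro u hu u' hu' hff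
        simp only [Finset.coe_sort_coe, Finset.mem_coe] at hu hu'
        by_contra hne
        -- the fiber of `u` contains `u` and `u'`
        have hm2 : 2 ≤ (s.filter fun w => f w = f u).card := by
          apply Finset.one_lt_card.mpr
          exact ⟨u, Finset.mem_filter.mpr ⟨hu, rfl⟩, u', Finset.mem_filter.mpr ⟨hu', hff.symm⟩,
            hne⟩
        set m := (s.filter fun w => f w = f u).card with hmdef
        have hm4 : m ≤ 4 := hfible u hu
        have hsum : s.card = ∑ B ∈ s.image f, (s.filter fun w => f w = B).card :=
          Finset.card_eq_sum_card_fiberwise fun x hx => Finset.mem_image_of_mem f hx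
        have hconst : ∀ B ∈ s.image f, (s.filter fun w => f w = B).card = m := by
          intro B hB
          obtain ⟨w, hw, rfl⟩ := Finset.mem_image.mp hB
          exact hfibcard w hw u hu
        rw [Finset.sum_congr rfl hconst, Finset.sum_const, smul_eq_mul, hs5] at hsum
        have hmdvd : m ∣ 5 := Dvd.intro_left _ hsum.symm
        interval_cases m
        · norm_num at hmdvd
        · norm_num at hmdvd
        · norm_num at hmdvd
      -- `Q` is 5-regular
      have hQdeg : ∀ B : MulAction.orbitRel.Quotient M V, Q.degree B = 5 := by
        intro B
        obtain ⟨v, rfl⟩ := hfsurj B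
        rw [← SimpleGraph.card_neighborFinset_eq_degree, hnbr v,
          Finset.card_image_of_injOn (hinj v), Γ.card_neighborFinset_eq_degree, hdeg]
      -- number of orbits is `n`
      have hΩcard : Fintype.card (MulAction.orbitRel.Quotient M V) = n := by
        have := hcount
        norm_num at this
        omega
      -- handshake lemma gives a parity contradiction
      have hhs := Q.sum_degrees_eq_twice_card_edges
      rw [Finset.sum_congr rfl (fun B _ => hQdeg B), Finset.sum_const, smul_eq_mul,
        Finset.card_univ, hΩcard] at hhs
      obtain ⟨j, hj⟩ := hodd
      omega
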